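/- arXiv:1912.11518 — 2 statements merged into one kernel-verified Lean document; each statement's English description precedes it below -/
import Mathlib

section
/- Let A be a symmetric real n×n matrix. Let {B_α} be the union of {E_{jj}: 1≤j≤n} and {(E_{jk}+E_{kj})/√2: j<k}. Then ∑_α B_α A B_α = (1/2)A + (1/2)tr(A)·I_n. -/
open Matrix

lemma sand {n : ℕ} (A : Matrix (Fin n) (Fin n) ℝ) (a b c d : Fin n) :
    Matrix.single a b (1:ℝ) * A * Matrix.single c d 1 = Matrix.single a d (A b c) := by
  ext i j
  simp only [mul_apply, Matrix.single, of_apply, ite_and, boole_mul, mul_boole,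
    Finset.sum_ite_eq, Finset.sum_ite_eq', Finset.mem_univ, if_true, mul_ite, mul_zero, mul_one,
    ite_mul, zero_mul, one_mul]
  split_ifs <;> simp_all

lemma split_sum {M : Type*} [AddCommMonoid M] (n : ℕ) (g : Fin n → Fin n → M) :
    (∑ j : Fin n, ∑ k : Fin n, if j < k then g j k else 0) +
    (∑ j : Fin n, ∑ k : Fin n, if k < j then g j k else 0) +
    (∑ j : Fin n, g j j) = ∑ j : Fin n, ∑ k : Fin n, g j k := by
  rw [← Finset.sum_add_distrib, ← Finset.sum_add_distrib]
  refine Finset.sum_congr rfl fun j _ => ?_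
  have hd : g j j = ∑ k : Fin n, if k = j then g j k else 0 := by simp
  rw [← Finset.sum_add_distrib, hd, ← Finset.sum_add_distrib]
  refine Finset.sum_congr rfl fun k _ => ?_
  rcases lt_trichotomy j k with h | rfl | h
  · simp [h, asymm h, h.ne']
  · simp
  · simp [h, asymm h, h.ne]

theorem stmt_3 (n : ℕ) (A : Matrix (Fin n) (Fin n) ℝ) (hA : Aᵀ = A) :
    (∑ j : Fin n, Matrix.single j j (1 : ℝ) * A * Matrix.single j j (1 : ℝ)) +
      (∑ j : Fin n, ∑ k : Fin n, if j < k then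
          ((1 / Real.sqrt 2) • (Matrix.single j k (1 : ℝ) + Matrix.single k j (1 : ℝ))) * A *
            ((1 / Real.sqrt 2) • (Matrix.single j k (1 : ℝ) + Matrix.single k j (1 : ℝ)))
        else 0)
      = (1 / 2 : ℝ) • A + ((1 / 2 : ℝ) * Matrix.trace A) • (1 : Matrix (Fin n) (Fin n) ℝ) := by
  set g : Fin n → Fin n → Matrix (Fin n) (Fin n) ℝ := fun j k =>
    (1/2 : ℝ) • (Matrix.single j k (A k j) + Matrix.single j j (A k k) +
      Matrix.single k k (A j j) + Matrix.single k j (A j k)) with hgdef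
  have hc : (1 / Real.sqrt 2 : ℝ) * (1 / Real.sqrt 2) = 1/2 := by
    rw [div_mul_div_comm, one_mul, Real.mul_self_sqrt (by norm_num)]
  have hg : ∀ j k : Fin n,
      ((1 / Real.sqrt 2) • (Matrix.single j k (1 : ℝ) + Matrix.single k j (1 : ℝ))) * A *
        ((1 / Real.sqrt 2) • (Matrix.single j k (1 : ℝ) + Matrix.single k j (1 : ℝ)))
      = g j k := by
    intro j k
    rw [smul_mul_assoc, smul_mul_assoc, mul_smul_comm, smul_smul, hc, hgdef]
    congr 1
    simp only [add_mul, mul_add, sand]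
    abel
  have hgsymm : ∀ j k : Fin n, g k j = g j k := by
    intro j k; simp only [hgdef]; congr 1; abel
  -- first sum is the diagonal matrix D
  have hD : (∑ j : Fin n, Matrix.single j j (1 : ℝ) * A * Matrix.single j j (1 : ℝ))
      = ∑ j : Fin n, Matrix.single j j (A j j) := by
    exact Finset.sum_congr rfl fun j _ => sand A j j j j
  -- closed forms
  have htr : ∑ j : Fin n, ∑ k : Fin n, Matrix.single j j (A k k)
      = (trace A) • (1 : Matrix (Fin n) (Fin n) ℝ) := by
    ext i i'
    simp [Matrix.sum_apply, Matrix.single, trace, one_apply, Finset.sum_ite_eq, ite_and, diag]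
  have hA1 : ∑ j : Fin n, ∑ k : Fin n, Matrix.single j k (A k j) = A := by
    conv_rhs => rw [← hA, matrix_eq_sum_single Aᵀ]
    simp [transpose_apply]
  -- total sum of g
  have hT : ∑ j : Fin n, ∑ k : Fin n, g j k
      = A + (trace A) • (1 : Matrix (Fin n) (Fin n) ℝ) := by
    simp only [hgdef, ← Finset.smul_sum, Finset.sum_add_distrib]
    rw [hA1, htr]
    rw [Finset.sum_comm (f := fun j k => Matrix.single k k (A j j)), htr]
    rw [Finset.sum_comm (f := fun j k => Matrix.single k j (A j k)), hA1]
    rw [smul_add, smul_add, smul_add]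
    module
  -- diagonal sum of g
  have hDg : ∑ j : Fin n, g j j = (2:ℝ) • ∑ j : Fin n, Matrix.single j j (A j j) := by
    rw [Finset.smul_sum]
    refine Finset.sum_congr rfl fun j _ => ?_
    simp only [hgdef]
    module
  -- the strict upper sum equals strict lower sum
  have hswap : (∑ j : Fin n, ∑ k : Fin n, if k < j then g j k else 0)
      = (∑ j : Fin n, ∑ k : Fin n, if j < k then g j k else 0) := by
    rw [Finset.sum_comm]
    exact Finset.sum_congr rfl fun j _ => Finset.sum_congr rfl fun k _ => by
      rw [hgsymm]
  have hsplit := split_sum n g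
  rw [hswap, hT, hDg] at hsplit
  -- rewrite goal
  have h2 : (∑ j : Fin n, ∑ k : Fin n, if j < k then
          ((1 / Real.sqrt 2) • (Matrix.single j k (1 : ℝ) + Matrix.single k j (1 : ℝ))) * A *
            ((1 / Real.sqrt 2) • (Matrix.single j k (1 : ℝ) + Matrix.single k j (1 : ℝ)))
        else 0)
      = ∑ j : Fin n, ∑ k : Fin n, if j < k then g j k else 0 := by
    exact Finset.sum_congr rfl fun j _ => Finset.sum_congr rfl fun k _ => by rw [hg]
  rw [hD, h2]
  linear_combination (norm := module) (1/2 : ℝ) • hsplit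
end

section
/- Let U be a Haar-distributed random matrix in O(d), d ≥ 2, let K be its first two columns, C = [[0,1],[−1,0]], and Q = K C K^T with entries q_{αβ}. Then for all indices α, β, γ, δ: E[q_{αβ} q_{γδ}] = (2/(d(d−1)))·(δ_{αγ}δ_{βδ} − δ_{αδ}δ_{βγ}). -/
open Matrix MeasureTheory

instance (d : ℕ) : MeasurableSpace (Matrix (Fin d) (Fin d) ℝ) :=
  (inferInstance : MeasurableSpace (Fin d → Fin d → ℝ))

namespace Stmt13Aux
variable {d : ℕ}

lemma entry_measurable (i j : Fin d) :
    Measurable (fun U : Matrix.orthogonalGroup (Fin d) ℝ => (U : Matrix (Fin d) (Fin d) ℝ) i j) := by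
  have : Measurable (fun M : Matrix (Fin d) (Fin d) ℝ => M i j) :=
    (measurable_pi_apply j).comp (measurable_pi_apply i)
  exact this.comp measurable_subtype_coe

lemma row_sum (U : Matrix.orthogonalGroup (Fin d) ℝ) (i : Fin d) :
    ∑ k, (U : Matrix (Fin d) (Fin d) ℝ) i k * (U : Matrix (Fin d) (Fin d) ℝ) i k = 1 := by
  have h := U.2.2
  have := congrFun (congrFun h i) i
  simp only [Matrix.mul_apply, Matrix.one_apply_eq] at this
  simpa [Matrix.star_apply] using this

lemma col_sum (U : Matrix.orthogonalGroup (Fin d) ℝ) (i j : Fin d) :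
    ∑ k, (U : Matrix (Fin d) (Fin d) ℝ) k i * (U : Matrix (Fin d) (Fin d) ℝ) k j
      = if i = j then 1 else 0 := by
  have h := U.2.1
  have := congrFun (congrFun h i) j
  simp only [Matrix.mul_apply, Matrix.one_apply] at this
  simpa [Matrix.star_apply, mul_comm] using this

lemma entry_bound (U : Matrix.orthogonalGroup (Fin d) ℝ) (i j : Fin d) :
    |(U : Matrix (Fin d) (Fin d) ℝ) i j| ≤ 1 := by
  rw [abs_le_one_iff_mul_self_le_one]
  calc (U : Matrix (Fin d) (Fin d) ℝ) i j * (U : Matrix (Fin d) (Fin d) ℝ) i j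
      ≤ ∑ k, (U : Matrix (Fin d) (Fin d) ℝ) i k * (U : Matrix (Fin d) (Fin d) ℝ) i k := by
        exact Finset.single_le_sum
          (f := fun k => (U : Matrix (Fin d) (Fin d) ℝ) i k * (U : Matrix (Fin d) (Fin d) ℝ) i k)
          (fun k _ => mul_self_nonneg _) (Finset.mem_univ j)
    _ = 1 := row_sum U i

lemma mul_measurable (A : Matrix.orthogonalGroup (Fin d) ℝ) :
    Measurable (fun U : Matrix.orthogonalGroup (Fin d) ℝ => A * U) := by
  have h1 : Measurable (fun U : Matrix.orthogonalGroup (Fin d) ℝ =>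
      ((A : Matrix (Fin d) (Fin d) ℝ) * (U : Matrix (Fin d) (Fin d) ℝ))) := by
    apply measurable_pi_lambda
    intro i
    apply measurable_pi_lambda
    intro j
    simp only [Matrix.mul_apply]
    apply Finset.measurable_sum
    intro k _
    apply Measurable.const_mul
    have : Measurable (fun M : Matrix (Fin d) (Fin d) ℝ => M k j) :=
      (measurable_pi_apply j).comp (measurable_pi_apply k)
    exact this.comp measurable_subtype_coe
  exact Measurable.subtype_mk h1

lemma integral_inv (μ : Measure (Matrix.orthogonalGroup (Fin d) ℝ))
    (hinv : ∀ A : Matrix.orthogonalGroup (Fin d) ℝ, μ.map (fun U => A * U) = μ)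
    (A : Matrix.orthogonalGroup (Fin d) ℝ) (f : Matrix.orthogonalGroup (Fin d) ℝ → ℝ)
    (hf : AEStronglyMeasurable f μ) :
    ∫ U, f U ∂μ = ∫ U, f (A * U) ∂μ := by
  conv_lhs => rw [← hinv A]
  rw [integral_map (mul_measurable A).aemeasurable]
  rw [hinv A]; exact hf

lemma star_eq_transpose (M : Matrix (Fin d) (Fin d) ℝ) : star M = Mᵀ := by
  ext i j
  simp [Matrix.star_apply]

lemma diag_mem (s : Fin d → ℝ) (hs : ∀ i, s i = 1 ∨ s i = -1) :
    Matrix.diagonal s ∈ Matrix.orthogonalGroup (Fin d) ℝ := by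
  rw [Matrix.mem_orthogonalGroup_iff, Matrix.diagonal_transpose,
    Matrix.diagonal_mul_diagonal]
  ext i j
  by_cases hij : i = j
  · subst hij
    rcases hs i with h | h <;> simp [Matrix.diagonal_apply, Matrix.one_apply, h]
  · simp [Matrix.diagonal_apply, Matrix.one_apply, hij]

def permMat (σ : Equiv.Perm (Fin d)) : Matrix (Fin d) (Fin d) ℝ :=
  Matrix.of fun i j => if σ i = j then 1 else 0

lemma permMat_mem (σ : Equiv.Perm (Fin d)) :
    permMat σ ∈ Matrix.orthogonalGroup (Fin d) ℝ := by
  rw [Matrix.mem_orthogonalGroup_iff]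
  ext i j
  simp only [Matrix.mul_apply, Matrix.transpose_apply, permMat, Matrix.of_apply]
  rw [Finset.sum_eq_single (σ i)]
  · simp [Matrix.one_apply, Equiv.apply_eq_iff_eq, eq_comm]
  · intro k _ hk
    simp [Ne.symm hk]
  · simp

lemma permMat_mul (σ : Equiv.Perm (Fin d)) (U : Matrix (Fin d) (Fin d) ℝ) (i k : Fin d) :
    (permMat σ * U) i k = U (σ i) k := by
  simp only [Matrix.mul_apply, permMat, Matrix.of_apply]
  rw [Finset.sum_eq_single (σ i)]
  · simp
  · intro b _ hb
    simp [Ne.symm hb]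
  · simp

lemma diag_mul (s : Fin d → ℝ) (U : Matrix (Fin d) (Fin d) ℝ) (i k : Fin d) :
    (Matrix.diagonal s * U) i k = s i * U i k := by
  simp [Matrix.diagonal_mul]

lemma sum_sq (a b : Fin d → ℝ) (ha : ∑ i, a i * a i = 1) (hb : ∑ i, b i * b i = 1)
    (hab : ∑ i, a i * b i = 0) :
    ∑ α, ∑ β, (a α * b β - a β * b α) * (a α * b β - a β * b α) = 2 := by
  have expand : ∀ α β : Fin d, (a α * b β - a β * b α) * (a α * b β - a β * b α)
      = ((a α * a α) * (b β * b β) - 2 * ((a α * b α) * (a β * b β)))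
        + (b α * b α) * (a β * a β) := by
    intros; ring
  have h1 : ∀ α : Fin d, ∑ β, (((a α * a α) * (b β * b β)
      - 2 * ((a α * b α) * (a β * b β))) + (b α * b α) * (a β * a β))
      = a α * a α + b α * b α := by
    intro α
    rw [Finset.sum_add_distrib, Finset.sum_sub_distrib]
    simp_rw [← Finset.mul_sum]
    rw [hb, ha, hab]
    ring
  simp_rw [expand, h1]
  rw [Finset.sum_add_distrib, ha, hb]
  norm_num

end Stmt13Aux

open Stmt13Aux

theorem stmt_13 (d : ℕ) (hd : 2 ≤ d)
    (μ : Measure (Matrix.orthogonalGroup (Fin d) ℝ)) [IsProbabilityMeasure μ]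
    (hinv : ∀ A : Matrix.orthogonalGroup (Fin d) ℝ,
      μ.map (fun U => A * U) = μ)
    (q : Matrix.orthogonalGroup (Fin d) ℝ → Fin d → Fin d → ℝ)
    (hq : ∀ U α β, q U α β =
      (U : Matrix (Fin d) (Fin d) ℝ) α (Fin.castLE hd 0) *
          (U : Matrix (Fin d) (Fin d) ℝ) β (Fin.castLE hd 1) -
        (U : Matrix (Fin d) (Fin d) ℝ) α (Fin.castLE hd 1) *
          (U : Matrix (Fin d) (Fin d) ℝ) β (Fin.castLE hd 0)) :
    ∀ α β γ δ : Fin d,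
      (∫ U, q U α β * q U γ δ ∂μ)
        = (2 / ((d : ℝ) * ((d : ℝ) - 1))) *
            ((if α = γ then (1 : ℝ) else 0) * (if β = δ then (1 : ℝ) else 0) -
              (if α = δ then (1 : ℝ) else 0) * (if β = γ then (1 : ℝ) else 0)) := by
  set i0 : Fin d := Fin.castLE hd 0 with hi0
  set i1 : Fin d := Fin.castLE hd 1 with hi1
  have hi01 : i0 ≠ i1 := by
    simp [hi0, hi1, Fin.ext_iff]
  -- basic measurability of q
  have hqm : ∀ α β, Measurable (fun U : Matrix.orthogonalGroup (Fin d) ℝ => q U α β) := by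
    intro α β
    have : (fun U : Matrix.orthogonalGroup (Fin d) ℝ => q U α β)
        = fun U : Matrix.orthogonalGroup (Fin d) ℝ =>
            (U : Matrix (Fin d) (Fin d) ℝ) α i0 * (U : Matrix (Fin d) (Fin d) ℝ) β i1
              - (U : Matrix (Fin d) (Fin d) ℝ) α i1 * (U : Matrix (Fin d) (Fin d) ℝ) β i0 :=
      funext fun U => hq U α β
    rw [this]
    exact ((entry_measurable α i0).mul (entry_measurable β i1)).sub
      ((entry_measurable α i1).mul (entry_measurable β i0))
  have hqb : ∀ U α β, |q U α β| ≤ 2 := by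
    intro U α β
    rw [hq]
    calc |(U : Matrix (Fin d) (Fin d) ℝ) α i0 * (U : Matrix (Fin d) (Fin d) ℝ) β i1
          - (U : Matrix (Fin d) (Fin d) ℝ) α i1 * (U : Matrix (Fin d) (Fin d) ℝ) β i0|
        ≤ |(U : Matrix (Fin d) (Fin d) ℝ) α i0 * (U : Matrix (Fin d) (Fin d) ℝ) β i1|
          + |(U : Matrix (Fin d) (Fin d) ℝ) α i1 * (U : Matrix (Fin d) (Fin d) ℝ) β i0| :=
        abs_sub _ _
      _ ≤ 1 * 1 + 1 * 1 := by
        rw [abs_mul, abs_mul]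
        gcongr <;> first
          | exact entry_bound U _ _
          | exact abs_nonneg _
      _ = 2 := by norm_num
  have hint : ∀ α β γ δ,
      Integrable (fun U => q U α β * q U γ δ) μ := by
    intro α β γ δ
    refine Integrable.mono' (integrable_const (4 : ℝ))
      (((hqm α β).mul (hqm γ δ)).aestronglyMeasurable) ?_
    filter_upwards with U
    rw [Real.norm_eq_abs, abs_mul]
    calc |q U α β| * |q U γ δ| ≤ 2 * 2 :=
      mul_le_mul (hqb U α β) (hqb U γ δ) (abs_nonneg _) (by norm_num)
    _ = 4 := by norm_num
  set M : Fin d → Fin d → Fin d → Fin d → ℝ :=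
    fun α β γ δ => ∫ U, q U α β * q U γ δ ∂μ with hM
  -- sign-flip invariance
  have hsign : ∀ (s : Fin d → ℝ), (∀ i, s i = 1 ∨ s i = -1) → ∀ α β γ δ,
      M α β γ δ = (s α * s β * s γ * s δ) * M α β γ δ := by
    intro s hs α β γ δ
    set A : Matrix.orthogonalGroup (Fin d) ℝ := ⟨Matrix.diagonal s, diag_mem s hs⟩ with hA
    have hcoe : ∀ U : Matrix.orthogonalGroup (Fin d) ℝ, ∀ i k : Fin d,
        ((A * U : Matrix.orthogonalGroup (Fin d) ℝ) : Matrix (Fin d) (Fin d) ℝ) i k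
          = s i * (U : Matrix (Fin d) (Fin d) ℝ) i k := by
      intro U i k
      have : ((A * U : Matrix.orthogonalGroup (Fin d) ℝ) : Matrix (Fin d) (Fin d) ℝ)
          = Matrix.diagonal s * (U : Matrix (Fin d) (Fin d) ℝ) := rfl
      rw [this, diag_mul]
    have hpt : ∀ U α' β', q (A * U) α' β' = (s α' * s β') * q U α' β' := by
      intro U α' β'
      rw [hq, hq, hcoe, hcoe, hcoe, hcoe]
      ring
    have step := integral_inv μ hinv A (fun U => q U α β * q U γ δ)
      (((hqm α β).mul (hqm γ δ)).aestronglyMeasurable)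
    calc M α β γ δ = ∫ U, q (A * U) α β * q (A * U) γ δ ∂μ := step
      _ = ∫ U, (s α * s β * s γ * s δ) * (q U α β * q U γ δ) ∂μ := by
          congr 1
          funext U
          rw [hpt, hpt]
          ring
      _ = (s α * s β * s γ * s δ) * M α β γ δ := integral_const_mul _ _
  -- vanishing when an index appears an odd number of times
  have hflip : ∀ (i α β γ δ : Fin d),
      ((if α = i then (-1 : ℝ) else 1) * (if β = i then (-1 : ℝ) else 1) *
        (if γ = i then (-1 : ℝ) else 1) * (if δ = i then (-1 : ℝ) else 1) = -1) →
      M α β γ δ = 0 := by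
    intro i α β γ δ hprod
    have hs : ∀ j, (if j = i then (-1 : ℝ) else 1) = 1 ∨ (if j = i then (-1 : ℝ) else 1) = -1 := by
      intro j; by_cases h : j = i <;> simp [h]
    have := hsign (fun j => if j = i then (-1 : ℝ) else 1) hs α β γ δ
    rw [hprod] at this
    linarith
  -- permutation invariance
  have hperm : ∀ (σ : Equiv.Perm (Fin d)) (α β γ δ : Fin d),
      M α β γ δ = M (σ α) (σ β) (σ γ) (σ δ) := by
    intro σ α β γ δ
    set A : Matrix.orthogonalGroup (Fin d) ℝ := ⟨permMat σ, permMat_mem σ⟩ with hA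
    have hcoe : ∀ U : Matrix.orthogonalGroup (Fin d) ℝ, ∀ i k : Fin d,
        ((A * U : Matrix.orthogonalGroup (Fin d) ℝ) : Matrix (Fin d) (Fin d) ℝ) i k
          = (U : Matrix (Fin d) (Fin d) ℝ) (σ i) k := by
      intro U i k
      have : ((A * U : Matrix.orthogonalGroup (Fin d) ℝ) : Matrix (Fin d) (Fin d) ℝ)
          = permMat σ * (U : Matrix (Fin d) (Fin d) ℝ) := rfl
      rw [this, permMat_mul]
    have hpt : ∀ U α' β', q (A * U) α' β' = q U (σ α') (σ β') := by
      intro U α' β'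
      rw [hq, hq, hcoe, hcoe, hcoe, hcoe]
    have step := integral_inv μ hinv A (fun U => q U α β * q U γ δ)
      (((hqm α β).mul (hqm γ δ)).aestronglyMeasurable)
    calc M α β γ δ = ∫ U, q (A * U) α β * q (A * U) γ δ ∂μ := step
      _ = ∫ U, q U (σ α) (σ β) * q U (σ γ) (σ δ) ∂μ := by
          congr 1
          funext U
          rw [hpt, hpt]
      _ = M (σ α) (σ β) (σ γ) (σ δ) := rfl
  -- all off-diagonal second moments are equal
  have hconst : ∀ α β : Fin d, α ≠ β → M α β α β = M i0 i1 i0 i1 := by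
    intro α β hab
    have hswap : ∃ σ : Equiv.Perm (Fin d), σ i0 = α ∧ σ i1 = β := by
      set σ1 := Equiv.swap i0 α with hσ1
      have h1 : σ1 i0 = α := Equiv.swap_apply_left _ _
      set b' := σ1 i1 with hb'
      have hb'α : b' ≠ α := by
        rw [hb', ← h1]
        intro h
        exact hi01 (σ1.injective h).symm
      set σ2 := Equiv.swap b' β with hσ2
      refine ⟨σ1.trans σ2, ?_, ?_⟩
      · simp only [Equiv.trans_apply, h1]
        rw [hσ2]
        exact Equiv.swap_apply_of_ne_of_ne (Ne.symm hb'α) hab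
      · simp only [Equiv.trans_apply, ← hb']
        exact Equiv.swap_apply_left _ _
    obtain ⟨σ, h0, h1⟩ := hswap
    rw [hperm σ i0 i1 i0 i1, h0, h1]
  -- diagonal entries of q vanish
  have hqdiag : ∀ U α, q U α α = 0 := by
    intro U α
    rw [hq]; ring
  -- total mass
  have htot : ∑ α : Fin d, ∑ β : Fin d, M α β α β = 2 := by
    have hsum : ∀ U : Matrix.orthogonalGroup (Fin d) ℝ,
        ∑ α : Fin d, ∑ β : Fin d, q U α β * q U α β = 2 := by
      intro U
      have key := sum_sq (fun α => (U : Matrix (Fin d) (Fin d) ℝ) α i0)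
        (fun α => (U : Matrix (Fin d) (Fin d) ℝ) α i1)
        (by simpa using col_sum U i0 i0)
        (by simpa using col_sum U i1 i1)
        (by simpa [hi01] using col_sum U i0 i1)
      rw [← key]
      refine Finset.sum_congr rfl fun x _ => Finset.sum_congr rfl fun y _ => ?_
      rw [hq]
      ring
    have h1 : ∑ α : Fin d, ∑ β : Fin d, M α β α β
        = ∫ U, ∑ α : Fin d, ∑ β : Fin d, q U α β * q U α β ∂μ := by
      rw [integral_finset_sum]
      · refine Finset.sum_congr rfl fun α _ => ?_
        rw [integral_finset_sum]
        intro β _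
        exact hint α β α β
      · intro α _
        exact integrable_finset_sum _ fun β _ => hint α β α β
    rw [h1]
    simp_rw [hsum]
    simp
  -- the common value
  have hval : ∀ α β : Fin d, α ≠ β → M α β α β = 2 / ((d : ℝ) * ((d : ℝ) - 1)) := by
    intro α β hab
    set c := M i0 i1 i0 i1 with hc
    have hMdiag : ∀ α : Fin d, M α α α α = 0 := by
      intro α'
      show (∫ U, q U α' α' * q U α' α' ∂μ) = 0
      have : (fun U => q U α' α' * q U α' α') = fun _ => (0 : ℝ) := by
        funext U; rw [hqdiag]; ring
      rw [this, integral_zero]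
    have hrow : ∀ α' : Fin d, ∑ β' : Fin d, M α' β' α' β' = (d : ℝ) * c - c := by
      intro α'
      have heach : ∀ β' : Fin d, M α' β' α' β' = c - (if β' = α' then c else 0) := by
        intro β'
        by_cases h : β' = α'
        · subst h; rw [hMdiag]; simp
        · rw [hconst α' β' (Ne.symm h)]; simp [h]
      simp_rw [heach]
      rw [Finset.sum_sub_distrib, Finset.sum_const, Finset.sum_ite_eq' Finset.univ α' (fun _ => c)]
      simp [Finset.card_univ]
    have h2 : (d : ℝ) * ((d : ℝ) * c - c) = 2 := by
      rw [← htot]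
      simp_rw [hrow]
      rw [Finset.sum_const]
      simp [Finset.card_univ]
    have hd2 : (2 : ℝ) ≤ (d : ℝ) := by exact_mod_cast hd
    have hne : (d : ℝ) * ((d : ℝ) - 1) ≠ 0 :=
      mul_ne_zero (by linarith) (by linarith)
    rw [hconst α β hab]
    rw [eq_div_iff hne]
    linear_combination h2
  -- main case analysis
  intro α β γ δ
  show M α β γ δ = _
  by_cases hab : α = β
  · have hzero : M α β γ δ = 0 := by
      show (∫ U, q U α β * q U γ δ ∂μ) = 0
      have : (fun U => q U α β * q U γ δ) = fun _ => (0 : ℝ) := by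
        funext U
        rw [← hab, hqdiag]
        ring
      rw [this, integral_zero]
    subst hab
    rw [hzero]
    ring
  by_cases hgd : γ = δ
  · have hzero : M α β γ δ = 0 := by
      show (∫ U, q U α β * q U γ δ ∂μ) = 0
      have : (fun U => q U α β * q U γ δ) = fun _ => (0 : ℝ) := by
        funext U
        rw [← hgd, hqdiag]
        ring
      rw [this, integral_zero]
    subst hgd
    rw [hzero]
    ring
  by_cases hag : α = γ
  · by_cases hbd : β = δ
    · have hv : M α β γ δ = 2 / ((d : ℝ) * ((d : ℝ) - 1)) := by
        rw [← hag, ← hbd]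
        exact hval α β hab
      have h5 : ¬ (α = δ) := fun h => hab (h.trans hbd.symm)
      rw [hv, if_pos hag, if_pos hbd, if_neg h5]
      ring
    · -- β appears exactly once: flip β
      have hz : M α β γ δ = 0 := by
        apply hflip β
        have h1 : ¬ (α = β) := hab
        have h2 : ¬ (γ = β) := fun h => hab (hag.trans h)
        have h3 : ¬ (δ = β) := fun h => hbd h.symm
        simp [h1, h2, h3]
      have h5 : ¬ (α = δ) := fun h => hgd (hag.symm.trans h)
      rw [hz, if_pos hag, if_neg hbd, if_neg h5]
      ring
  · by_cases had : α = δ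
    · by_cases hbg : β = γ
      · have hanti : M α β γ δ = - M α β α β := by
          show (∫ U, q U α β * q U γ δ ∂μ) = -(∫ U, q U α β * q U α β ∂μ)
          have : (fun U => q U α β * q U γ δ) = fun U => -(q U α β * q U α β) := by
            funext U
            have h6 : q U γ δ = - q U α β := by
              rw [← hbg, ← had, hq, hq]
              ring
            rw [h6]
            ring
          rw [this, integral_neg]
        have h7 : ¬ (β = δ) := fun h => hab (had.trans h.symm)
        rw [hanti, hval α β hab, if_neg hag, if_pos had, if_pos hbg, if_neg h7]
        ring
      · -- β appears exactly once: flip β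
        have hz : M α β γ δ = 0 := by
          apply hflip β
          have h1 : ¬ (α = β) := hab
          have h2 : ¬ (γ = β) := fun h => hbg h.symm
          have h3 : ¬ (δ = β) := fun h => hab (had.trans h)
          simp [h1, h2, h3]
        rw [hz, if_neg hag, if_neg hbg]
        ring
    · -- α appears exactly once: flip α
      have hz : M α β γ δ = 0 := by
        apply hflip α
        have h1 : ¬ (β = α) := fun h => hab h.symm
        have h2 : ¬ (γ = α) := fun h => hag h.symm
        have h3 : ¬ (δ = α) := fun h => had h.symm
        simp [h1, h2, h3]
      rw [hz, if_neg hag, if_neg had]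
      ring
end
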